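/- Let n ≥ 0, λ > 0, C ≥ 0, let K ⊆ Δ(S) be a simplicial complex, and let f: X → K^(n) be a (λ,C)-Lipschitz map from a metric space X into the n-skeleton of K. Then the Lebesgue number of the cover {f⁻¹(st(v)) : v ∈ S} of X is at least R = (1 − (n+1)·C)/((n+1)·λ). -/

import Mathlib

open Function Metric ENNReal

noncomputable section

/-- `ℓ¹(S)`: real-valued functions on `S` with finite `ℓ¹`-norm, with the `ℓ¹` metric. -/
abbrev ellOne (S : Type u) : Type u := lp (fun _ : S => ℝ) 1

/-- The full simplex `Δ(S) ⊆ ℓ¹(S)`. -/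
def fullSimplex (S : Type u) : Set (ellOne S) :=
  {p | (∀ s, 0 ≤ p s) ∧ (support (p : S → ℝ)).Finite ∧ ∑' s, p s = 1}

/-- The `n`-skeleton `Δ(S)^(n)` of the full simplex. -/
def skeleton (S : Type u) (n : ℕ) : Set (ellOne S) :=
  {p ∈ fullSimplex S | (support (p : S → ℝ)).encard ≤ n + 1}

/-- A simplicial complex on `S`: a subset of `Δ(S)` closed under passing to
points whose support is contained in the support of a member. -/
def IsSimplicialComplex {S : Type u} (K : Set (ellOne S)) : Prop :=
  K ⊆ fullSimplex S ∧
    ∀ p ∈ K, ∀ q ∈ fullSimplex S,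
      support (q : S → ℝ) ⊆ support (p : S → ℝ) → q ∈ K

/-- The star of a vertex `v` in `K`. -/
def star {S : Type u} (K : Set (ellOne S)) (v : S) : Set (ellOne S) :=
  {p ∈ K | 0 < p v}

/-- `f` is `(λ, C)`-Lipschitz. -/
def IsLipschitzLC {X Y : Type*} [MetricSpace X] [MetricSpace Y]
    (l C : ℝ) (f : X → Y) : Prop :=
  ∀ x y, dist (f x) (f y) ≤ l * dist x y + C

/-- A family of sets is uniformly bounded. -/
def UniformlyBounded {X : Type*} [MetricSpace X] {ι : Type*} (U : ι → Set X) : Prop :=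
  ∃ M : ℝ, ∀ i, ∀ x ∈ U i, ∀ y ∈ U i, dist x y ≤ M

/-- `U` is a cover of the whole space. -/
def IsCover {X : Type*} {ι : Type*} (U : ι → Set X) : Prop := ∀ x, ∃ i, x ∈ U i

/-- The Lebesgue number `inf_x sup_i dist(x, X∖Uᵢ)` of a family, as a value in `ℝ≥0∞`. -/
def lebesgue {X : Type*} [MetricSpace X] {ι : Type*} (U : ι → Set X) : ℝ≥0∞ :=
  ⨅ x : X, ⨆ i, EMetric.infEdist x (U i)ᶜ

/-- The multiplicity of `U` is at most `m`. -/
def MultiplicityLE {X : Type*} [MetricSpace X] {ι : Type*} (U : ι → Set X) (m : ℕ) : Prop :=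
  ∀ x : X, {i | 0 < Metric.infDist x ((U i)ᶜ)}.encard ≤ m

/-- `f : X → K` is a `δ`-partition of unity. -/
def IsDeltaPartitionOfUnity {X : Type*} [MetricSpace X] {S : Type u}
    (δ : ℝ) (K : Set (ellOne S)) (f : X → ellOne S) : Prop :=
  (∀ x, f x ∈ K) ∧ IsLipschitzLC δ δ f ∧
    UniformlyBounded (fun v : S => f ⁻¹' star K v) ∧
    ENNReal.ofReal (1 / δ) ≤ lebesgue (fun v : S => f ⁻¹' star K v)

/-- `X` is large scale paracompact. -/
def LSParacompact (X : Type u) [MetricSpace X] : Prop :=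
  ∀ (ι : Type u) (U : ι → Set X), IsCover U → UniformlyBounded U →
    ∀ l C : ℝ, 0 < l → 0 < C →
      ∃ (S : Type u) (K : Set (ellOne S)) (f : X → ellOne S),
        IsSimplicialComplex K ∧ (∀ x, f x ∈ K) ∧ IsLipschitzLC l C f ∧
        UniformlyBounded (fun v : S => f ⁻¹' star K v) ∧
        ∀ i, ∃ v : S, U i ⊆ f ⁻¹' star K v

/-- `X` has asymptotic dimension at most `n`. -/
def AsdimLE (X : Type u) [MetricSpace X] (n : ℕ) : Prop :=
  ∀ R : ℝ, 0 < R → ∃ (ι : Type u) (U : ι → Set X),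
    IsCover U ∧ UniformlyBounded U ∧ MultiplicityLE U (n + 1) ∧
    ENNReal.ofReal R ≤ lebesgue U

/-- `X` has Property A. -/
def PropertyA (X : Type u) [MetricSpace X] : Prop :=
  ∀ R ε : ℝ, 0 < R → 0 < ε →
    ∃ (M : ℝ) (S : Type u) (φ : S → X → ℝ), 0 < M ∧
      (∀ s x, 0 ≤ φ s x ∧ φ s x ≤ 1) ∧
      (∀ x, (support fun s => φ s x).Finite) ∧
      (∀ x, ∑' s, φ s x = 1) ∧
      (∀ x y, dist x y ≤ R → ∑' s, |φ s x - φ s y| < ε) ∧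
      (∀ s, ∀ x ∈ support (φ s), ∀ y ∈ support (φ s), dist x y ≤ M)

/-- `f` has `(R, ε)` variation. -/
def HasVariation {X Y : Type*} [MetricSpace X] [MetricSpace Y] (R ε : ℝ) (f : X → Y) : Prop :=
  ∀ x y, dist x y ≤ R → dist (f x) (f y) < ε

/-- `g` is a coarse embedding. -/
def CoarseEmbedding {X Y : Type*} [MetricSpace X] [MetricSpace Y] (g : X → Y) : Prop :=
  ∃ ρminus ρplus : ℝ → ℝ, Monotone ρminus ∧ Monotone ρplus ∧
    Filter.Tendsto ρminus Filter.atTop Filter.atTop ∧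
    ∀ x y, ρminus (dist x y) ≤ dist (g x) (g y) ∧ dist (g x) (g y) ≤ ρplus (dist x y)

/-- `X` has bounded geometry: balls of any fixed radius have uniformly bounded cardinality. -/
def BoundedGeometry (X : Type*) [MetricSpace X] : Prop :=
  ∀ r : ℝ, 0 < r → ∃ N : ℕ, ∀ x : X, (Metric.ball x r).encard ≤ N

lemma exists_big' {S : Type u} (n : ℕ) (p : ellOne S) (hp : p ∈ skeleton S n) :
    ∃ v : S, 1 / (n + 1) ≤ p v := by
  obtain ⟨⟨hnn, hfin, hsum⟩, hcard⟩ := hp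
  by_contra h
  push_neg at h
  have hsum' : ∑ s ∈ hfin.toFinset, p s = 1 := by
    rw [← hsum]; exact (tsum_eq_sum (fun s hs => by
      simpa using fun h' => hs (hfin.mem_toFinset.mpr h'))).symm
  have hne : hfin.toFinset.Nonempty := by
    rcases hfin.toFinset.eq_empty_or_nonempty with h0 | h0
    · rw [h0, Finset.sum_empty] at hsum'; norm_num at hsum'
    · exact h0
  have hlt : ∑ s ∈ hfin.toFinset, p s < ∑ s ∈ hfin.toFinset, (1 / (n + 1) : ℝ) :=
    Finset.sum_lt_sum_of_nonempty hne (fun s _ => h s)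
  rw [hsum', Finset.sum_const, nsmul_eq_mul] at hlt
  have hcard' : (hfin.toFinset.card : ℝ) ≤ (n : ℝ) + 1 := by
    have := hcard
    rw [hfin.encard_eq_coe_toFinset_card] at this
    exact_mod_cast this
  have hpos : (0:ℝ) < (n : ℝ) + 1 := by positivity
  have : (hfin.toFinset.card : ℝ) * (1 / (n + 1)) ≤ 1 := by
    rw [mul_one_div, div_le_one hpos]; exact hcard'
  linarith

/-- if `f : X → K^(n)` is `(λ, C)`-Lipschitz, then the Lebesgue number of
`{f⁻¹(st v)}` is at least `(1 − (n+1)·C)/((n+1)·λ)`. -/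
theorem lebesgue_of_lipschitz_map {X : Type*} [MetricSpace X] {S : Type u}
    (n : ℕ) (l C : ℝ) (hl : 0 < l) (hC : 0 ≤ C)
    (K : Set (ellOne S)) (hK : IsSimplicialComplex K)
    (f : X → ellOne S) (hf : ∀ x, f x ∈ K ∩ skeleton S n)
    (hLip : IsLipschitzLC l C f) :
    ENNReal.ofReal ((1 - (n + 1) * C) / ((n + 1) * l)) ≤
      lebesgue (fun v : S => f ⁻¹' star K v) := by
  set R : ℝ := (1 - (n + 1) * C) / ((n + 1) * l) with hR
  refine le_iInf fun x => ?_
  obtain ⟨v, hv⟩ := exists_big' n (f x) (hf x).2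
  refine le_trans ?_ (le_iSup _ v)
  refine (EMetric.le_infEdist).2 ?_
  intro y hy
  have hyv : (f y : S → ℝ) v = 0 := by
    have hK' : f y ∈ K := (hf y).1
    have : ¬ (0 < (f y : S → ℝ) v) := fun h => hy ⟨hK', h⟩
    have hnn := ((hK.1 hK').1 v)
    linarith
  have hd : 1 / (n + 1) ≤ dist (f x) (f y) := by
    have h1 : ‖(f x - f y) v‖ ≤ ‖f x - f y‖ :=
      lp.norm_apply_le_norm one_ne_zero (f x - f y) v
    have h2 : ((f x - f y : ellOne S) : S → ℝ) v = (f x : S → ℝ) v - (f y : S → ℝ) v := rfl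
    rw [dist_eq_norm]
    calc (1 : ℝ) / (n + 1) ≤ (f x : S → ℝ) v := hv
      _ = |(f x : S → ℝ) v - (f y : S → ℝ) v| := by
          rw [hyv, sub_zero, abs_of_nonneg (((hK.1 (hf x).1).1) v)]
      _ = ‖((f x - f y : ellOne S) : S → ℝ) v‖ := by rw [h2, Real.norm_eq_abs]
      _ ≤ ‖f x - f y‖ := h1
  have hRd : R ≤ dist x y := by
    have := hLip x y
    have hpos : (0:ℝ) < (n : ℝ) + 1 := by positivity
    rw [hR, div_le_iff₀ (by positivity)]
    have : 1 / ((n:ℝ) + 1) ≤ l * dist x y + C := le_trans hd this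
    have h' : 1 - ((n:ℝ) + 1) * C ≤ ((n:ℝ) + 1) * (l * dist x y) := by
      have := mul_le_mul_of_nonneg_left this (le_of_lt hpos)
      rw [mul_add, mul_one_div, div_self (ne_of_gt hpos)] at this
      linarith
    calc 1 - ((n:ℝ) + 1) * C ≤ ((n:ℝ) + 1) * (l * dist x y) := h'
      _ = dist x y * (((n:ℝ) + 1) * l) := by ring
  calc ENNReal.ofReal R ≤ ENNReal.ofReal (dist x y) := ofReal_le_ofReal hRd
    _ = edist x y := (edist_dist x y).symm

end
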